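/- Let Q be a connected loop-less quiver whose Coxeter-Laplace matrix Λ_Q = Id_m - I(Q)Ǧ_Q^{-1}I(Q)^T is the permutation matrix of a permutation ξ of the m vertices with cycle type (π_1,...,π_ℓ). If ℓ = 1 (i.e., ξ is an m-cycle), then Cox_Q^{π_1} = Id, and π_1 is the minimal positive integer k with Cox_Q^k = Id. -/

import Mathlib

open Matrix Polynomial

/-- Incidence matrix of a quiver with vertex set `Fin m`, arrow set `Fin n`,
source map `s` and target map `t`: the column of arrow `i` is `e_{s i} - e_{t i}`. -/
def incMatrix {m n : ℕ} (s t : Fin n → Fin m) : Matrix (Fin m) (Fin n) ℤ :=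
  Matrix.of fun v i => (if v = s i then (1 : ℤ) else 0) - (if v = t i then (1 : ℤ) else 0)

/-- Connectedness of the underlying multigraph of the quiver `(s, t)`. -/
def QuiverConnected {m n : ℕ} (s t : Fin n → Fin m) : Prop :=
  ∀ v w : Fin m,
    Relation.ReflTransGen (fun a b => ∃ i : Fin n, (s i = a ∧ t i = b) ∨ (s i = b ∧ t i = a)) v w

/-- The endpoint of arrow `i` other than `v` (for a loop-less quiver). -/
def otherEnd {m n : ℕ} (s t : Fin n → Fin m) (i : Fin n) (v : Fin m) : Fin m :=
  if s i = v then t i else s i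

/-- Iterate the minimally decreasing walk starting at `v`, using only arrows with
index `< b`, always crossing the maximal available arrow. Returns the final vertex. -/
def xiAux {m n : ℕ} (s t : Fin n → Fin m) (b : ℕ) (v : Fin m) : Fin m :=
  if h : (Finset.univ.filter (fun i : Fin n => (s i = v ∨ t i = v) ∧ i.val < b)).Nonempty then
    xiAux s t
      ((Finset.univ.filter (fun i : Fin n => (s i = v ∨ t i = v) ∧ i.val < b)).max' h).val
      (otherEnd s t
        ((Finset.univ.filter (fun i : Fin n => (s i = v ∨ t i = v) ∧ i.val < b)).max' h) v)
  else v
termination_by b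
decreasing_by
  exact (Finset.mem_filter.mp (Finset.max'_mem _ h)).2.2

/-- The permutation of vertices `ξ⁻` determined by structural minimally decreasing walks:
`xiDown s t v` is the end vertex of the structural decreasing walk starting at `v`. -/
def xiDown {m n : ℕ} (s t : Fin n → Fin m) (v : Fin m) : Fin m :=
  xiAux s t n v

/-- Iterate the minimally increasing walk starting at `v`, using only arrows with
index `≥ b`, always crossing the minimal available arrow. Returns the final vertex. -/
def xiAuxUp {m n : ℕ} (s t : Fin n → Fin m) (b : ℕ) (v : Fin m) : Fin m :=
  if h : (Finset.univ.filter (fun i : Fin n => (s i = v ∨ t i = v) ∧ b ≤ i.val)).Nonempty then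
    xiAuxUp s t
      (((Finset.univ.filter (fun i : Fin n => (s i = v ∨ t i = v) ∧ b ≤ i.val)).min' h).val + 1)
      (otherEnd s t
        ((Finset.univ.filter (fun i : Fin n => (s i = v ∨ t i = v) ∧ b ≤ i.val)).min' h) v)
  else v
termination_by n - b
decreasing_by
  have h1 := (Finset.mem_filter.mp (Finset.min'_mem _ h)).2.2
  have h2 := ((Finset.univ.filter (fun i : Fin n => (s i = v ∨ t i = v) ∧ b ≤ i.val)).min' h).isLt
  omega

/-- The map `ξ⁺`: end vertex of the structural minimally increasing walk starting at `v`. -/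
def xiUp {m n : ℕ} (s t : Fin n → Fin m) (v : Fin m) : Fin m :=
  xiAuxUp s t 0 v


/-- Source vertex of a walk-step `(i, ε)`: `s i` if traversed positively, else `t i`. -/
def stepSrc {m n : ℕ} (s t : Fin n → Fin m) (p : Fin n × Bool) : Fin m :=
  if p.2 then s p.1 else t p.1

/-- Target vertex of a walk-step `(i, ε)`. -/
def stepTgt {m n : ℕ} (s t : Fin n → Fin m) (p : Fin n × Bool) : Fin m :=
  if p.2 then t p.1 else s p.1

/-! ### Auxiliary lemmas -/

section CycleAux

variable {m : ℕ} (ξ : Equiv.Perm (Fin m))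

lemma cycle_reach (hone : ∀ v w : Fin m, ξ.SameCycle v w) (v w : Fin m) :
    ∃ j : ℕ, (ξ ^ j) v = w := by
  obtain ⟨i, -, h⟩ := (hone v w).exists_pow_eq'
  exact ⟨i, h⟩

lemma cycle_no_short_period (hone : ∀ v w : Fin m, ξ.SameCycle v w)
    (v : Fin m) (c : ℕ) (hc0 : 0 < c) (hcm : c < m) (hfix : (ξ ^ c) v = v) : False := by
  have hmul : ∀ q : ℕ, (ξ ^ (c * q)) v = v := by
    intro q
    induction q with
    | zero => simp
    | succ q ih =>
      rw [Nat.mul_succ, pow_add, Equiv.Perm.mul_apply, hfix]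
      exact ih
  have hred : ∀ j : ℕ, (ξ ^ j) v = (ξ ^ (j % c)) v := by
    intro j
    conv_lhs => rw [← Nat.mod_add_div j c]
    rw [pow_add, Equiv.Perm.mul_apply, hmul]
  have hsub : (Finset.univ : Finset (Fin m)) ⊆
      (Finset.range c).image (fun j => (ξ ^ j) v) := by
    intro w _
    obtain ⟨j, hj⟩ := cycle_reach ξ hone v w
    exact Finset.mem_image.mpr ⟨j % c, Finset.mem_range.mpr (Nat.mod_lt _ hc0),
      by rw [← hred, hj]⟩
  have h1 := Finset.card_le_card hsub
  have h2 := Finset.card_image_le (s := Finset.range c) (f := fun j => (ξ ^ j) v)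
  rw [Finset.card_univ, Fintype.card_fin] at h1
  rw [Finset.card_range] at h2
  omega

lemma cycle_inj (hone : ∀ v w : Fin m, ξ.SameCycle v w)
    (v : Fin m) {a b : ℕ} (ha : a < m) (hb : b < m)
    (h : (ξ ^ a) v = (ξ ^ b) v) : a = b := by
  rcases Nat.lt_trichotomy a b with hl | he | hl
  · exfalso
    apply cycle_no_short_period ξ hone ((ξ ^ a) v) (b - a) (by omega) (by omega)
    rw [← Equiv.Perm.mul_apply, ← pow_add, Nat.sub_add_cancel hl.le]
    exact h.symm
  · exact he
  · exfalso
    apply cycle_no_short_period ξ hone ((ξ ^ b) v) (a - b) (by omega) (by omega)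
    rw [← Equiv.Perm.mul_apply, ← pow_add, Nat.sub_add_cancel hl.le]
    exact h

lemma cycle_period (hone : ∀ v w : Fin m, ξ.SameCycle v w) (hm : 0 < m)
    (v : Fin m) : (ξ ^ m) v = v := by
  have hinj : Function.Injective (fun j : Fin m => (ξ ^ (j : ℕ)) v) := by
    intro a b hab
    exact Fin.ext (cycle_inj ξ hone v a.isLt b.isLt hab)
  obtain ⟨j, hj⟩ := Finite.surjective_of_injective hinj ((ξ ^ m) v)
  rcases Nat.eq_zero_or_pos (j : ℕ) with h0 | h0
  · simp only at hj
    rw [h0, pow_zero] at hj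
    simpa using hj.symm
  · exfalso
    apply cycle_no_short_period ξ hone ((ξ ^ (j : ℕ)) v) (m - (j : ℕ))
      (by have := j.isLt; omega) (by omega)
    rw [← Equiv.Perm.mul_apply, ← pow_add, Nat.sub_add_cancel j.isLt.le]
    exact hj.symm

lemma cycle_mod (hone : ∀ v w : Fin m, ξ.SameCycle v w) (hm : 0 < m)
    (v : Fin m) (j : ℕ) : (ξ ^ j) v = (ξ ^ (j % m)) v := by
  have hmul : ∀ q : ℕ, (ξ ^ (m * q)) v = v := by
    intro q
    induction q with
    | zero => simp
    | succ q ih =>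
      rw [Nat.mul_succ, pow_add, Equiv.Perm.mul_apply, cycle_period ξ hone hm]
      exact ih
  conv_lhs => rw [← Nat.mod_add_div j m]
  rw [pow_add, Equiv.Perm.mul_apply, hmul]

lemma cycle_surj_lt (hone : ∀ v w : Fin m, ξ.SameCycle v w) (hm : 0 < m)
    (v w : Fin m) : ∃ j, j < m ∧ (ξ ^ j) v = w := by
  obtain ⟨j, hj⟩ := cycle_reach ξ hone v w
  exact ⟨j % m, Nat.mod_lt _ hm, by rw [← cycle_mod ξ hone hm, hj]⟩

lemma permMat_pow (k : ℕ) :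
    ((Matrix.of fun w v : Fin m => if w = ξ v then (1 : ℤ) else 0) ^ k)
      = Matrix.of fun w v : Fin m => if w = (ξ ^ k) v then (1 : ℤ) else 0 := by
  induction k with
  | zero =>
    ext w v
    simp [Matrix.one_apply]
  | succ k ih =>
    ext w v
    rw [pow_succ, ih, Matrix.mul_apply]
    simp only [Matrix.of_apply]
    rw [Finset.sum_eq_single (ξ v)]
    · simp [pow_succ, Equiv.Perm.mul_apply]
    · intro u _ hu
      simp [hu]
    · intro h
      exact absurd (Finset.mem_univ _) h

lemma nu_entry (hone : ∀ v w : Fin m, ξ.SameCycle v w) (hm : 0 < m)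
    (k : ℕ) (hk : k ≤ m) (w v : Fin m) :
    (∑ j ∈ Finset.range k,
        (Matrix.of fun w v : Fin m => if w = ξ v then (1 : ℤ) else 0) ^ j) w v
      = if ∃ j, j < k ∧ (ξ ^ j) v = w then 1 else 0 := by
  rw [Matrix.sum_apply]
  simp only [permMat_pow, Matrix.of_apply]
  by_cases h : ∃ j, j < k ∧ (ξ ^ j) v = w
  · obtain ⟨j₀, hj₀k, hj₀⟩ := h
    rw [if_pos ⟨j₀, hj₀k, hj₀⟩, Finset.sum_eq_single j₀]
    · rw [if_pos hj₀.symm]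
    · intro j hj hne
      rw [if_neg]
      intro hw
      exact hne (cycle_inj ξ hone v (lt_of_lt_of_le (Finset.mem_range.mp hj) hk)
        (lt_of_lt_of_le hj₀k hk) (hw ▸ hj₀).symm)
    · intro hmem
      exact absurd (Finset.mem_range.mpr hj₀k) hmem
  · rw [if_neg h, Finset.sum_eq_zero]
    intro j hj
    rw [if_neg]
    intro hw
    exact h ⟨j, Finset.mem_range.mp hj, hw.symm⟩

lemma nu_colsum (k : ℕ) (u : Fin m) :
    ∑ v, (∑ j ∈ Finset.range k,
        (Matrix.of fun w v : Fin m => if w = ξ v then (1 : ℤ) else 0) ^ j) v u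
      = (k : ℤ) := by
  simp only [Matrix.sum_apply, permMat_pow, Matrix.of_apply]
  rw [Finset.sum_comm]
  simp

end CycleAux

lemma combo_mod {m k p : ℕ} (hk0 : 0 < k) (hkm : k < m) (hp0 : 0 < p) (hpk : p < k)
    (H : ∀ j : ℕ, j % m < k ↔ (j + p) % m < k) : False := by
  have hm : 0 < m := by omega
  have hg0 : 0 < Nat.gcd p m := Nat.gcd_pos_of_pos_left m hp0
  have hgp : Nat.gcd p m ≤ p := Nat.le_of_dvd hp0 (Nat.gcd_dvd_left p m)
  have hgm : Nat.gcd p m < m := by omega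
  have Ht : ∀ (u j : ℕ), j % m < k ↔ (j + u * p) % m < k := by
    intro u
    induction u with
    | zero => intro j; simp
    | succ u ih =>
      intro j
      rw [ih j, show j + (u + 1) * p = (j + u * p) + p by ring]
      exact H (j + u * p)
  obtain ⟨u, -, hu⟩ := Nat.exists_mul_mod_eq_gcd (n := p) (k := m) hgm
  have Hg : ∀ j : ℕ, j % m < k ↔ (j + Nat.gcd p m) % m < k := by
    intro j
    rw [Ht u j]
    have heq : (j + u * p) % m = (j + Nat.gcd p m) % m := by
      conv_lhs => rw [Nat.add_mod]
      conv_rhs => rw [Nat.add_mod]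
      rw [mul_comm u p, hu, Nat.mod_eq_of_lt hgm]
    rw [heq]
  have h1 := Hg (m - 1)
  have hL : ¬ (m - 1) % m < k := by
    rw [Nat.mod_eq_of_lt (by omega)]
    omega
  apply hL
  rw [h1]
  have h2 : (m - 1 + Nat.gcd p m) % m = Nat.gcd p m - 1 := by
    rw [show m - 1 + Nat.gcd p m = (Nat.gcd p m - 1) + 1 * m by omega,
      Nat.add_mul_mod_self_right, Nat.mod_eq_of_lt (by omega)]
  rw [h2]
  omega

lemma connected_constant {m n : ℕ} (s t : Fin n → Fin m)
    (hconn : QuiverConnected s t) (x : Fin m → ℤ) (hx : ∀ i, x (s i) = x (t i)) :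
    ∀ v w, x v = x w := by
  intro v w
  induction hconn v w with
  | refl => rfl
  | tail hr h ih =>
    obtain ⟨i, hi | hi⟩ := h
    · rw [ih, ← hi.1, ← hi.2]
      exact hx i
    · rw [ih, ← hi.1, ← hi.2]
      exact (hx i).symm

/-- if the Coxeter-Laplace matrix of a connected loop-less quiver is the
permutation matrix of a permutation `ξ` which is a single `m`-cycle (one orbit, `ℓ = 1`,
so `π_1 = m`), then `Cox_Q^m = Id` and `m` is the minimal positive `k` with `Cox_Q^k = Id`. -/
theorem coxeter_number_single_cycle {m n : ℕ} (hm : 0 < m) (s t : Fin n → Fin m)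
    (hloop : ∀ i : Fin n, s i ≠ t i) (hconn : QuiverConnected s t)
    (G : Matrix (Fin n) (Fin n) ℤ)
    (hupper : ∀ i j : Fin n, j < i → G i j = 0)
    (hdiag : ∀ i : Fin n, G i i = 1)
    (hGram : (incMatrix s t)ᵀ * incMatrix s t = G + Gᵀ)
    (ξ : Equiv.Perm (Fin m))
    (hΛ : 1 - incMatrix s t * G⁻¹ * (incMatrix s t)ᵀ
        = Matrix.of fun w v : Fin m => if w = ξ v then (1 : ℤ) else 0)
    (hone : ∀ v w : Fin m, ξ.SameCycle v w) :
    (-(Gᵀ * G⁻¹)) ^ m = 1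
    ∧ ∀ k : ℕ, 0 < k → k < m → (-(Gᵀ * G⁻¹)) ^ k ≠ 1 := by
  classical
  have hdet : IsUnit G.det := by
    have hbt : G.BlockTriangular id := fun i j h => hupper i j h
    rw [Matrix.det_of_upperTriangular hbt]
    simp [hdiag]
  have hGG : G * G⁻¹ = 1 := Matrix.mul_nonsing_inv G hdet
  have hGG' : G⁻¹ * G = 1 := Matrix.nonsing_inv_mul G hdet
  set Iq := incMatrix s t with hIq
  set Λ : Matrix (Fin m) (Fin m) ℤ := 1 - Iq * G⁻¹ * Iqᵀ with hΛdef
  have hCox1 : (1 : Matrix (Fin n) (Fin n) ℤ) - Iqᵀ * Iq * G⁻¹ = -(Gᵀ * G⁻¹) := by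
    rw [hGram, Matrix.add_mul, hGG]
    abel
  have hIL : Iqᵀ * Λ = (-(Gᵀ * G⁻¹)) * Iqᵀ := by
    rw [hΛdef, Matrix.mul_sub, Matrix.mul_one]
    simp only [← Matrix.mul_assoc]
    rw [hGram, Matrix.add_mul, Matrix.add_mul, hGG, Matrix.one_mul, Matrix.neg_mul]
    abel
  have hkey : ∀ k : ℕ, (-(Gᵀ * G⁻¹)) ^ k
      = 1 - Iqᵀ * (∑ j ∈ Finset.range k, Λ ^ j) * Iq * G⁻¹ := by
    intro k
    induction k with
    | zero => simp
    | succ k ih =>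
      have expand : (-(Gᵀ * G⁻¹)) * (1 - Iqᵀ * (∑ j ∈ Finset.range k, Λ ^ j) * Iq * G⁻¹)
          = -(Gᵀ * G⁻¹) - Iqᵀ * Λ * (∑ j ∈ Finset.range k, Λ ^ j) * Iq * G⁻¹ := by
        rw [Matrix.mul_sub, Matrix.mul_one]
        simp only [← Matrix.mul_assoc]
        rw [← hIL]
      rw [pow_succ', ih, expand, geom_sum_succ, ← hCox1]
      simp only [Matrix.mul_add, Matrix.add_mul, Matrix.mul_one, Matrix.one_mul,
        ← Matrix.mul_assoc]
      abel
  constructor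
  · have hν1 : ∀ w v : Fin m, (∑ j ∈ Finset.range m, Λ ^ j) w v = 1 := by
      intro w v
      rw [hΛ, nu_entry ξ hone hm m le_rfl w v,
        if_pos (cycle_surj_lt ξ hone hm v w)]
    have hIν : Iqᵀ * (∑ j ∈ Finset.range m, Λ ^ j) = 0 := by
      ext i v
      rw [Matrix.mul_apply, Matrix.zero_apply]
      rw [Finset.sum_congr rfl (fun w _ => by rw [hν1 w v, mul_one])]
      show ∑ w, Iq w i = 0
      simp [hIq, incMatrix, Finset.sum_sub_distrib]
    rw [hkey m, hIν, Matrix.zero_mul, Matrix.zero_mul, sub_zero]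
  · intro k hk0 hkm hEq
    have hX : Iqᵀ * (∑ j ∈ Finset.range k, Λ ^ j) * Iq * G⁻¹ = 0 := by
      have h1 := hkey k
      rw [hEq] at h1
      exact sub_eq_self.mp h1.symm
    have hXI : Iqᵀ * (∑ j ∈ Finset.range k, Λ ^ j) * Iq = 0 := by
      calc Iqᵀ * (∑ j ∈ Finset.range k, Λ ^ j) * Iq
          = Iqᵀ * (∑ j ∈ Finset.range k, Λ ^ j) * Iq * (G⁻¹ * G) := by
            rw [hGG', Matrix.mul_one]
        _ = (Iqᵀ * (∑ j ∈ Finset.range k, Λ ^ j) * Iq * G⁻¹) * G := by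
            simp only [Matrix.mul_assoc]
        _ = 0 := by rw [hX, Matrix.zero_mul]
    have hN : Iqᵀ * ((∑ j ∈ Finset.range k, Λ ^ j) * Iq) = 0 := by
      rw [← Matrix.mul_assoc]
      exact hXI
    have hn : 0 < n := by
      by_contra hn
      have hrel : ∀ v w : Fin m, v = w := by
        intro v w
        induction hconn v w with
        | refl => rfl
        | tail hr h ih =>
          obtain ⟨i, -⟩ := h
          have := i.isLt
          omega
      have h01 := hrel ⟨0, by omega⟩ ⟨1, by omega⟩
      simp [Fin.ext_iff] at h01
    set i₀ : Fin n := ⟨0, hn⟩ with hi₀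
    have hNval : ∀ v : Fin m, ((∑ j ∈ Finset.range k, Λ ^ j) * Iq) v i₀
        = (∑ j ∈ Finset.range k, Λ ^ j) v (s i₀) - (∑ j ∈ Finset.range k, Λ ^ j) v (t i₀) := by
      intro v
      rw [Matrix.mul_apply]
      simp [hIq, incMatrix, mul_sub, mul_ite, Finset.sum_sub_distrib]
    have hedge : ∀ i : Fin n, ((∑ j ∈ Finset.range k, Λ ^ j) * Iq) (s i) i₀
        = ((∑ j ∈ Finset.range k, Λ ^ j) * Iq) (t i) i₀ := by
      intro i
      have h : ∑ w, Iqᵀ i w * ((∑ j ∈ Finset.range k, Λ ^ j) * Iq) w i₀ = 0 := by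
        rw [← Matrix.mul_apply, hN, Matrix.zero_apply]
      have h2 : ∀ w, Iqᵀ i w = (if w = s i then (1 : ℤ) else 0)
          - (if w = t i then 1 else 0) := fun w => rfl
      rw [Finset.sum_congr rfl (fun w _ => by rw [h2 w])] at h
      simp only [sub_mul, ite_mul, one_mul, zero_mul, Finset.sum_sub_distrib,
        Finset.sum_ite_eq', Finset.mem_univ, if_true] at h
      exact sub_eq_zero.mp h
    have hconst := connected_constant s t hconn
      (fun v => ((∑ j ∈ Finset.range k, Λ ^ j) * Iq) v i₀) hedge
    have hcolsum : ∀ u : Fin m,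
        ∑ v, (∑ j ∈ Finset.range k, Λ ^ j) v u = (k : ℤ) := by
      intro u
      rw [hΛ]
      exact nu_colsum ξ k u
    have hsum0 : ∑ v, ((∑ j ∈ Finset.range k, Λ ^ j) * Iq) v i₀ = 0 := by
      rw [Finset.sum_congr rfl (fun v _ => hNval v), Finset.sum_sub_distrib,
        hcolsum (s i₀), hcolsum (t i₀), sub_self]
    have hzero : ∀ v : Fin m, ((∑ j ∈ Finset.range k, Λ ^ j) * Iq) v i₀ = 0 := by
      intro v
      have hs : ∑ w, ((∑ j ∈ Finset.range k, Λ ^ j) * Iq) w i₀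
          = (m : ℤ) * ((∑ j ∈ Finset.range k, Λ ^ j) * Iq) v i₀ := by
        rw [Finset.sum_congr rfl (fun w _ => hconst w v), Finset.sum_const,
          Finset.card_univ, Fintype.card_fin, nsmul_eq_mul]
      rw [hsum0] at hs
      have hm0 : (m : ℤ) ≠ 0 := by exact_mod_cast hm.ne'
      exact ((mul_eq_zero.mp hs.symm).resolve_left hm0)
    have hcols : ∀ v : Fin m, (∑ j ∈ Finset.range k, Λ ^ j) v (s i₀)
        = (∑ j ∈ Finset.range k, Λ ^ j) v (t i₀) := by
      intro v
      have h := hzero v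
      rw [hNval v] at h
      omega
    have hiff : ∀ v : Fin m,
        (∃ j, j < k ∧ (ξ ^ j) (s i₀) = v) ↔ (∃ j, j < k ∧ (ξ ^ j) (t i₀) = v) := by
      intro v
      have h := hcols v
      rw [hΛ, nu_entry ξ hone hm k hkm.le v (s i₀),
        nu_entry ξ hone hm k hkm.le v (t i₀)] at h
      split_ifs at h with h1 h2
      · exact iff_of_true h1 h2
      · exact absurd h one_ne_zero
      · exact absurd h.symm one_ne_zero
      · exact iff_of_false h1 (by assumption)
    obtain ⟨p, hpk, hpa⟩ := (hiff (t i₀)).mpr ⟨0, hk0, by simp⟩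
    have hp0 : 0 < p := by
      rcases Nat.eq_zero_or_pos p with h0 | h0
      · rw [h0, pow_zero] at hpa
        exact absurd hpa (hloop i₀)
      · exact h0
    have Hnum : ∀ j : ℕ, j % m < k ↔ (j + p) % m < k := by
      intro j
      have hA : ((j + p) % m < k) ↔
          (∃ j', j' < k ∧ (ξ ^ j') (s i₀) = (ξ ^ (j + p)) (s i₀)) := by
        constructor
        · intro h
          exact ⟨(j + p) % m, h, (cycle_mod ξ hone hm (s i₀) (j + p)).symm⟩
        · rintro ⟨j', hj', h⟩
          have h2 : (ξ ^ j') (s i₀) = (ξ ^ ((j + p) % m)) (s i₀) :=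
            h.trans (cycle_mod ξ hone hm (s i₀) (j + p))
          have h3 := cycle_inj ξ hone (s i₀) (lt_of_lt_of_le hj' hkm.le)
            (Nat.mod_lt _ hm) h2
          omega
      have hB : (∃ j', j' < k ∧ (ξ ^ j') (t i₀) = (ξ ^ (j + p)) (s i₀)) ↔
          (j % m < k) := by
        constructor
        · rintro ⟨j', hj', h⟩
          rw [← hpa, ← Equiv.Perm.mul_apply, ← pow_add] at h
          have h2 : (ξ ^ ((j' + p) % m)) (s i₀) = (ξ ^ ((j + p) % m)) (s i₀) := by
            rw [← cycle_mod ξ hone hm (s i₀), ← cycle_mod ξ hone hm (s i₀), h]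
          have h3 := cycle_inj ξ hone (s i₀) (Nat.mod_lt _ hm) (Nat.mod_lt _ hm) h2
          have h4 : j' % m = j % m := Nat.ModEq.add_right_cancel' p h3
          rw [← h4, Nat.mod_eq_of_lt (hj'.trans hkm)]
          exact hj'
        · intro h
          refine ⟨j % m, h, ?_⟩
          rw [← hpa, ← Equiv.Perm.mul_apply, ← pow_add]
          rw [cycle_mod ξ hone hm (s i₀) (j % m + p), cycle_mod ξ hone hm (s i₀) (j + p)]
          have he : (j % m + p) % m = (j + p) % m :=
            Nat.ModEq.add_right p (Nat.mod_modEq j m)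
          rw [he]
      exact hB.symm.trans ((hiff ((ξ ^ (j + p)) (s i₀))).symm.trans hA.symm)
    exact combo_mod hk0 hkm hp0 hpk Hnum
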